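/- Let {a_ν} be a non-negative decreasing sequence, α > 0, λ ∈ ℝ, and 0 < p ≤ 1. Then there exists C > 0 depending only on α, λ, p such that for all positive integers n, m with m ≥ 4n, ∑_{μ=4n}^{m} μ^{-α-1} (∑_{ν=4n}^{μ} a_ν ν^λ)^p ≤ C ∑_{μ=n}^{m} μ^{-α-1} (a_μ μ^{λ+1})^p. -/

import Mathlib

open Finset

private lemma telescope_Icc (g : ℕ → ℝ) (a : ℕ) (ha : 1 ≤ a) :
    ∀ b : ℕ, a ≤ b + 1 → ∑ k ∈ Icc a b, (g k - g (k - 1)) = g b - g (a - 1) := by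
  intro b
  induction b with
  | zero =>
    intro h
    have : a = 1 := by omega
    subst this
    simp
  | succ b ih =>
    intro h
    rcases Nat.lt_or_ge b a with h' | h'
    · rcases Nat.eq_or_lt_of_le h with h2 | h2
      · have : a = b + 2 := by omega
        subst this
        rw [Finset.Icc_eq_empty (by omega)]
        simp
      · have hab : a ≤ b + 1 := by omega
        have hab' : a = b + 1 := by omega
        subst hab'
        simp
    · rw [Finset.sum_Icc_succ_top (by omega : a ≤ b + 1)]
      rw [ih (by omega)]
      have : b + 1 - 1 = b := by omega
      rw [this]
      ring

private lemma min_rpow_le (lam : ℝ) {x y z : ℝ} (hx : 0 < x) (hxy : x ≤ y) (hyz : y ≤ z) :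
    min (x ^ lam) (z ^ lam) ≤ y ^ lam := by
  rcases le_or_gt 0 lam with h | h
  · exact le_trans (min_le_left _ _) (Real.rpow_le_rpow hx.le hxy h)
  · exact le_trans (min_le_right _ _) (Real.rpow_le_rpow_of_nonpos (hx.trans_le hxy) hyz h.le)

private lemma rpow_le_max (lam : ℝ) {x y z : ℝ} (hx : 0 < x) (hxy : x ≤ y) (hyz : y ≤ z) :
    y ^ lam ≤ max (x ^ lam) (z ^ lam) := by
  rcases le_or_gt 0 lam with h | h
  · exact le_trans (Real.rpow_le_rpow (hx.trans_le hxy).le hyz h) (le_max_right _ _)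
  · exact le_trans (Real.rpow_le_rpow_of_nonpos hx hxy h.le) (le_max_left _ _)

private lemma one_add_le_rpow_neg {α : ℝ} (hα : 0 < α) {t : ℝ} (ht0 : 0 < t) (ht1 : t < 1) :
    1 + α * t ≤ (1 - t) ^ (-α) := by
  have h1 : (0:ℝ) < 1 - t := by linarith
  have h2 : (1 - t : ℝ) ≤ Real.exp (-t) := by
    have := Real.add_one_le_exp (-t)
    linarith
  have h3 : (1 - t) ^ α ≤ Real.exp (-t) ^ α := Real.rpow_le_rpow h1.le h2 hα.le
  have h4 : Real.exp (-t) ^ α = Real.exp (-(t * α)) := by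
    rw [← Real.exp_mul]; ring_nf
  have h5 : 1 + α * t ≤ Real.exp (t * α) := by
    have := Real.add_one_le_exp (t * α)
    linarith [this]
  have hpow_pos : (0:ℝ) < (1 - t) ^ α := Real.rpow_pos_of_pos h1 α
  have h6 : (1 - t) ^ α * (1 + α * t) ≤ 1 := by
    calc (1 - t) ^ α * (1 + α * t) ≤ Real.exp (-(t * α)) * Real.exp (t * α) := by
          apply mul_le_mul (h4 ▸ h3) h5 (by positivity) (Real.exp_pos _).le
      _ = 1 := by rw [← Real.exp_add]; simp
  rw [Real.rpow_neg h1.le, ← one_div, le_div_iff₀ hpow_pos, mul_comm]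
  exact h6

private lemma w_step {α : ℝ} (hα : 0 < α) {μ : ℕ} (hμ : 2 ≤ μ) :
    (μ:ℝ) ^ (-α - 1) ≤ (1/α) * (((μ - 1 : ℕ):ℝ) ^ (-α) - (μ:ℝ) ^ (-α)) := by
  have hx2 : (2:ℝ) ≤ (μ:ℝ) := by exact_mod_cast hμ
  have hx0 : (0:ℝ) < (μ:ℝ) := by linarith
  have hcast : ((μ - 1 : ℕ):ℝ) = (μ:ℝ) - 1 := by
    push_cast [Nat.cast_sub (by omega : 1 ≤ μ)]; ring
  set x : ℝ := (μ:ℝ) with hxdef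
  have ht0 : (0:ℝ) < 1/x := by positivity
  have ht1 : 1/x < 1 := by rw [div_lt_one hx0]; linarith
  have hber := one_add_le_rpow_neg hα ht0 ht1
  have hfact : x - 1 = x * (1 - 1/x) := by field_simp
  have hsplit : (x - 1) ^ (-α) = x ^ (-α) * (1 - 1/x) ^ (-α) := by
    rw [hfact, Real.mul_rpow hx0.le (by nlinarith : (0:ℝ) ≤ 1 - 1/x)]
  have hxα : (0:ℝ) < x ^ (-α) := Real.rpow_pos_of_pos hx0 _
  have hlow : x ^ (-α) * (1 + α * (1/x)) ≤ (x - 1) ^ (-α) := by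
    rw [hsplit]
    exact mul_le_mul_of_nonneg_left hber hxα.le
  have hxα1 : x ^ (-α) * (1/x) = x ^ (-α - 1) := by
    rw [show -α - 1 = -α + (-1) by ring, Real.rpow_add hx0, Real.rpow_neg_one, one_div]
  have key : α * x ^ (-α - 1) ≤ (x - 1) ^ (-α) - x ^ (-α) := by
    have : x ^ (-α) * (1 + α * (1/x)) = x ^ (-α) + α * (x ^ (-α) * (1/x)) := by ring
    rw [this, hxα1] at hlow
    linarith
  rw [hcast, one_div, inv_mul_eq_div, le_div_iff₀ hα, mul_comm]
  exact key

private lemma sum_w_le {α : ℝ} (hα : 0 < α) (ν m : ℕ) (hν : 1 ≤ ν) :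
    ∑ μ ∈ Icc ν m, (μ:ℝ) ^ (-α - 1) ≤ (1 + 1/α) * (ν:ℝ) ^ (-α) := by
  have hν1 : (1:ℝ) ≤ (ν:ℝ) := by exact_mod_cast hν
  have hνpos : (0:ℝ) < (ν:ℝ) := by linarith
  have hRpos : (0:ℝ) < (1 + 1/α) * (ν:ℝ) ^ (-α) := by
    have := Real.rpow_pos_of_pos hνpos (-α); positivity
  rcases le_or_gt ν m with hm | hm
  swap
  · rw [Finset.Icc_eq_empty (by omega)]; simpa using hRpos.le
  have hmem : ν ∈ Icc ν m := by simp [hm]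
  rw [← Finset.add_sum_erase _ _ hmem, Finset.Icc_erase_left, ← Finset.Icc_add_one_left_eq_Ioc]
  have hbase : (ν:ℝ) ^ (-α - 1) ≤ (ν:ℝ) ^ (-α) :=
    Real.rpow_le_rpow_of_exponent_le hν1 (by linarith)
  have htail : ∑ μ ∈ Icc (ν+1) m, (μ:ℝ) ^ (-α - 1) ≤ (1/α) * (ν:ℝ) ^ (-α) := by
    have hstep : ∑ μ ∈ Icc (ν+1) m, (μ:ℝ) ^ (-α - 1)
        ≤ ∑ μ ∈ Icc (ν+1) m, (1/α) * ((-(((μ:ℕ):ℝ) ^ (-α))) - (-(((μ - 1:ℕ):ℝ) ^ (-α)))) := by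
      apply Finset.sum_le_sum
      intro μ hμ
      simp only [mem_Icc] at hμ
      have := w_step hα (by omega : 2 ≤ μ)
      calc (μ:ℝ) ^ (-α - 1) ≤ (1/α) * (((μ - 1 : ℕ):ℝ) ^ (-α) - (μ:ℝ) ^ (-α)) := this
        _ = (1/α) * ((-(((μ:ℕ):ℝ) ^ (-α))) - (-(((μ - 1:ℕ):ℝ) ^ (-α)))) := by ring
    rw [← Finset.mul_sum] at hstep
    have htel := telescope_Icc (fun k => -((k:ℝ) ^ (-α))) (ν+1) (by omega) m (by omega)
    rw [htel] at hstep
    have hm0 : (0:ℝ) ≤ (m:ℝ) ^ (-α) := Real.rpow_nonneg (by positivity) _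
    have : (ν + 1 - 1 : ℕ) = ν := by omega
    rw [this] at hstep
    calc ∑ μ ∈ Icc (ν+1) m, (μ:ℝ) ^ (-α - 1)
        ≤ (1/α) * (-((m:ℝ) ^ (-α)) - (-((ν:ℝ) ^ (-α)))) := hstep
      _ ≤ (1/α) * (ν:ℝ) ^ (-α) := by
          have h1α : (0:ℝ) ≤ 1/α := by positivity
          have : (-((m:ℝ) ^ (-α)) - (-((ν:ℝ) ^ (-α)))) ≤ (ν:ℝ) ^ (-α) := by linarith
          exact mul_le_mul_of_nonneg_left this h1α
  calc (ν:ℝ) ^ (-α - 1) + ∑ μ ∈ Icc (ν+1) m, (μ:ℝ) ^ (-α - 1)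
      ≤ (ν:ℝ) ^ (-α) + (1/α) * (ν:ℝ) ^ (-α) := add_le_add hbase htail
    _ = (1 + 1/α) * (ν:ℝ) ^ (-α) := by ring

private lemma p_step {p : ℝ} (hp0 : 0 < p) (hp1 : p ≤ 1) {k : ℕ} (hk : 1 ≤ k) :
    p * (k:ℝ) ^ (p - 1) ≤ (k:ℝ) ^ p - ((k - 1 : ℕ):ℝ) ^ p := by
  have hx1 : (1:ℝ) ≤ (k:ℝ) := by exact_mod_cast hk
  have hx0 : (0:ℝ) < (k:ℝ) := by linarith
  have hcast : ((k - 1 : ℕ):ℝ) = (k:ℝ) - 1 := by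
    push_cast [Nat.cast_sub hk]; ring
  set x : ℝ := (k:ℝ)
  have hs : (-1:ℝ) ≤ -(1/x) := by
    rw [neg_le_neg_iff, div_le_one hx0]; exact hx1
  have hber := rpow_one_add_le_one_add_mul_self hs hp0.le hp1
  have hfact : x - 1 = x * (1 + -(1/x)) := by field_simp; ring
  have h1x : (0:ℝ) ≤ 1 + -(1/x) := by
    have : 1/x ≤ 1 := by rw [div_le_one hx0]; exact hx1
    linarith
  have hsplit : (x - 1) ^ p = x ^ p * (1 + -(1/x)) ^ p := by
    rw [hfact, Real.mul_rpow hx0.le h1x]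
  have hxp : (0:ℝ) < x ^ p := Real.rpow_pos_of_pos hx0 _
  have hxp1 : x ^ p * (1/x) = x ^ (p - 1) := by
    rw [show p - 1 = p + (-1) by ring, Real.rpow_add hx0, Real.rpow_neg_one, one_div]
  have : (x - 1) ^ p ≤ x ^ p * (1 + p * -(1/x)) := by
    rw [hsplit]; exact mul_le_mul_of_nonneg_left hber hxp.le
  have hexp : x ^ p * (1 + p * -(1/x)) = x ^ p - p * (x ^ p * (1/x)) := by ring
  rw [hexp, hxp1] at this
  rw [hcast]
  linarith

private lemma sum_pow_le {p : ℝ} (hp0 : 0 < p) (hp1 : p ≤ 1) (N : ℕ) :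
    ∑ k ∈ Icc 1 N, (k:ℝ) ^ (p - 1) ≤ (1/p) * (N:ℝ) ^ p := by
  have h1 : p * ∑ k ∈ Icc 1 N, (k:ℝ) ^ (p - 1) ≤ (N:ℝ) ^ p := by
    rw [Finset.mul_sum]
    have htel := telescope_Icc (fun k => (k:ℝ) ^ p) 1 le_rfl N (by omega)
    calc ∑ k ∈ Icc 1 N, p * (k:ℝ) ^ (p - 1)
        ≤ ∑ k ∈ Icc 1 N, ((k:ℝ) ^ p - ((k - 1 : ℕ):ℝ) ^ p) := by
          apply Finset.sum_le_sum
          intro k hk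
          simp only [mem_Icc] at hk
          exact p_step hp0 hp1 hk.1
      _ = (N:ℝ) ^ p - ((1 - 1 : ℕ):ℝ) ^ p := htel
      _ ≤ (N:ℝ) ^ p := by
          simp only [Nat.sub_self, Nat.cast_zero]
          rw [Real.zero_rpow hp0.ne']
          simp
  rw [one_div, inv_mul_eq_div, le_div_iff₀ hp0, mul_comm]
  exact h1

-- decomposition + swap
private lemma decomp (g w : ℕ → ℝ) (A m : ℕ) (hA : 1 ≤ A) (hg : g (A - 1) = 0) :
    ∑ μ ∈ Icc A m, w μ * g μ
      = ∑ ν ∈ Icc A m, (g ν - g (ν - 1)) * ∑ μ ∈ Icc ν m, w μ := by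
  have h1 : ∀ μ ∈ Icc A m, w μ * g μ = ∑ ν ∈ Icc A μ, w μ * (g ν - g (ν - 1)) := by
    intro μ hμ
    simp only [mem_Icc] at hμ
    rw [← Finset.mul_sum, telescope_Icc g A hA μ (by omega), hg, sub_zero]
  rw [Finset.sum_congr rfl h1]
  rw [Finset.sum_comm' (t' := Icc A m) (s' := fun ν => Icc ν m)
    (by intro x y; simp only [mem_Icc]; omega)]
  apply Finset.sum_congr rfl
  intro ν _
  rw [Finset.mul_sum]
  apply Finset.sum_congr rfl
  intro μ _
  ring

private lemma d_nonneg (a : ℕ → ℝ) (lam p : ℝ) (hp0 : 0 < p)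
    (ha0 : ∀ ν, 0 ≤ a ν) (A ν : ℕ) :
    0 ≤ (∑ k ∈ Icc A ν, a k * (k:ℝ)^lam)^p - (∑ k ∈ Icc A (ν-1), a k * (k:ℝ)^lam)^p := by
  have h1 : ∑ k ∈ Icc A (ν-1), a k * (k:ℝ)^lam ≤ ∑ k ∈ Icc A ν, a k * (k:ℝ)^lam := by
    apply Finset.sum_le_sum_of_subset_of_nonneg
    · exact Finset.Icc_subset_Icc_right (by omega)
    · intro k _ _
      exact mul_nonneg (ha0 k) (Real.rpow_nonneg (Nat.cast_nonneg k) _)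
  have h0 : 0 ≤ ∑ k ∈ Icc A (ν-1), a k * (k:ℝ)^lam :=
    Finset.sum_nonneg fun k _ => mul_nonneg (ha0 k) (Real.rpow_nonneg (Nat.cast_nonneg k) _)
  have := Real.rpow_le_rpow h0 h1 hp0.le
  linarith

private lemma d_bound (a : ℕ → ℝ) (lam p : ℝ) (hp0 : 0 < p) (hp1 : p ≤ 1)
    (ha0 : ∀ ν, 0 ≤ a ν) (hanti : ∀ i j : ℕ, i ≤ j → a j ≤ a i)
    (A : ℕ) (hA : 1 ≤ A) (haA : 0 < a A) (ν : ℕ) (hν : A + 1 ≤ ν) :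
    (∑ k ∈ Icc A ν, a k * (k:ℝ)^lam)^p - (∑ k ∈ Icc A (ν-1), a k * (k:ℝ)^lam)^p
      ≤ (a ν)^p * (ν:ℝ)^lam * (∑ j ∈ Icc A (ν-1), (j:ℝ)^lam)^(p-1) := by
  obtain ⟨ν', rfl⟩ : ∃ ν', ν = ν' + 1 := ⟨ν - 1, by omega⟩
  have hν' : A ≤ ν' := by omega
  simp only [Nat.add_sub_cancel]
  set S' : ℝ := ∑ k ∈ Icc A ν', a k * (k:ℝ)^lam with hS'def
  set T' : ℝ := ∑ j ∈ Icc A ν', (j:ℝ)^lam with hT'def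
  have hApos : (0:ℝ) < (A:ℝ) := by exact_mod_cast hA
  have hterm : ∀ k ∈ Icc A ν', (0:ℝ) ≤ a k * (k:ℝ)^lam := fun k _ =>
    mul_nonneg (ha0 k) (Real.rpow_nonneg (Nat.cast_nonneg k) _)
  have hS'pos : 0 < S' := by
    have h1 : a A * (A:ℝ)^lam ≤ S' :=
      Finset.single_le_sum hterm (by simp [mem_Icc, hν'])
    have h2 : 0 < a A * (A:ℝ)^lam := mul_pos haA (Real.rpow_pos_of_pos hApos _)
    linarith
  have hT'pos : 0 < T' := by
    apply Finset.sum_pos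
    · intro j hj
      simp only [mem_Icc] at hj
      exact Real.rpow_pos_of_pos (by exact_mod_cast (by omega : 1 ≤ j)) _
    · exact ⟨A, by simp [mem_Icc, hν']⟩
  have hSsum : ∑ k ∈ Icc A (ν' + 1), a k * (k:ℝ)^lam = S' + a (ν'+1) * ((ν'+1:ℕ):ℝ)^lam := by
    rw [Finset.sum_Icc_succ_top (by omega)]
  have hST : a (ν'+1) * T' ≤ S' := by
    rw [hT'def, Finset.mul_sum]
    apply Finset.sum_le_sum
    intro j hj
    simp only [mem_Icc] at hj
    exact mul_le_mul_of_nonneg_right (hanti j (ν'+1) (by omega))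
      (Real.rpow_nonneg (Nat.cast_nonneg j) _)
  rcases eq_or_lt_of_le (ha0 (ν'+1)) with h0 | haν
  · rw [hSsum, ← h0, zero_mul, add_zero, sub_self, Real.zero_rpow hp0.ne', zero_mul, zero_mul]
  · have hp1' : p - 1 ≤ 0 := by linarith
    have hcν : (0:ℝ) ≤ a (ν'+1) * ((ν'+1:ℕ):ℝ)^lam :=
      mul_nonneg haν.le (Real.rpow_nonneg (Nat.cast_nonneg _) _)
    have hSpos : 0 < S' + a (ν'+1) * ((ν'+1:ℕ):ℝ)^lam := by linarith
    have hmono : S' ≤ S' + a (ν'+1) * ((ν'+1:ℕ):ℝ)^lam := by linarith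
    set S : ℝ := S' + a (ν'+1) * ((ν'+1:ℕ):ℝ)^lam with hSdef
    have key1 : S ^ p ≤ S' ^ (p-1) * S := by
      have e1 : S ^ p = S ^ (p-1) * S := by
        rw [← Real.rpow_add_one hSpos.ne' (p-1)]; ring_nf
      rw [e1]
      exact mul_le_mul_of_nonneg_right
        (Real.rpow_le_rpow_of_nonpos hS'pos hmono hp1') hSpos.le
    have key2 : S' ^ p = S' ^ (p-1) * S' := by
      rw [← Real.rpow_add_one hS'pos.ne' (p-1)]; ring_nf
    have step1 : S ^ p - S' ^ p ≤ S' ^ (p-1) * (a (ν'+1) * ((ν'+1:ℕ):ℝ)^lam) := by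
      rw [key2] at *
      have : S' ^ (p-1) * S - S' ^ (p-1) * S' = S' ^ (p-1) * (a (ν'+1) * ((ν'+1:ℕ):ℝ)^lam) := by
        rw [hSdef]; ring
      linarith
    have key3 : S' ^ (p-1) ≤ (a (ν'+1)) ^ (p-1) * T' ^ (p-1) := by
      rw [← Real.mul_rpow haν.le hT'pos.le]
      exact Real.rpow_le_rpow_of_nonpos (mul_pos haν hT'pos) hST hp1'
    have step2 : S' ^ (p-1) * (a (ν'+1) * ((ν'+1:ℕ):ℝ)^lam)
        ≤ ((a (ν'+1)) ^ (p-1) * T' ^ (p-1)) * (a (ν'+1) * ((ν'+1:ℕ):ℝ)^lam) :=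
      mul_le_mul_of_nonneg_right key3 hcν
    have key4 : ((a (ν'+1)) ^ (p-1) * T' ^ (p-1)) * (a (ν'+1) * ((ν'+1:ℕ):ℝ)^lam)
        = (a (ν'+1)) ^ p * ((ν'+1:ℕ):ℝ)^lam * T' ^ (p-1) := by
      have : (a (ν'+1)) ^ (p-1) * a (ν'+1) = (a (ν'+1)) ^ p := by
        rw [← Real.rpow_add_one haν.ne' (p-1)]; ring_nf
      rw [← this]; ring
    rw [hSsum]
    calc S ^ p - S' ^ p ≤ S' ^ (p-1) * (a (ν'+1) * ((ν'+1:ℕ):ℝ)^lam) := step1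
      _ ≤ ((a (ν'+1)) ^ (p-1) * T' ^ (p-1)) * (a (ν'+1) * ((ν'+1:ℕ):ℝ)^lam) := step2
      _ = (a (ν'+1)) ^ p * ((ν'+1:ℕ):ℝ)^lam * T' ^ (p-1) := key4

private lemma T_lower_B (lam : ℝ) {A ν : ℕ} (hA : 1 ≤ A) (hν : 2*A + 1 ≤ ν) :
    (min ((3:ℝ)^(-lam)) 1 / 3) * (ν:ℝ)^(lam+1) ≤ ∑ j ∈ Icc A (ν-1), (j:ℝ)^lam := by
  have hν3 : 3 ≤ ν := by omega
  have hνR : (3:ℝ) ≤ (ν:ℝ) := by exact_mod_cast hν3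
  have hνpos : (0:ℝ) < (ν:ℝ) := by linarith
  set c1 : ℝ := min ((3:ℝ)^(-lam)) 1 with hc1def
  have hc1pos : 0 < c1 := lt_min (Real.rpow_pos_of_pos (by norm_num) _) one_pos
  set b : ℝ := min (((ν:ℝ)/3)^lam) ((ν:ℝ)^lam) with hbdef
  have hb : ∀ j ∈ Icc (ν/2) (ν-1), b ≤ (j:ℝ)^lam := by
    intro j hj
    simp only [mem_Icc] at hj
    apply min_rpow_le lam (by positivity : (0:ℝ) < (ν:ℝ)/3)
    · have h3j : ν ≤ 3 * j := by omega
      have : (ν:ℝ) ≤ 3 * (j:ℝ) := by exact_mod_cast h3j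
      linarith [div_le_iff₀ (by norm_num : (0:ℝ) < 3) |>.mpr (by linarith : (ν:ℝ) ≤ (j:ℝ) * 3)]
    · exact_mod_cast (by omega : j ≤ ν)
  have hcard : (Icc (ν/2) (ν-1)).card = ν - ν/2 := by
    rw [Nat.card_Icc]; omega
  have h3 := Finset.card_nsmul_le_sum (Icc (ν/2) (ν-1)) (fun j => (j:ℝ)^lam) b hb
  rw [hcard, nsmul_eq_mul] at h3
  have hbc1 : c1 * (ν:ℝ)^lam ≤ b := by
    apply le_min
    · have he : ((ν:ℝ)/3)^lam = (ν:ℝ)^lam * (3:ℝ)^(-lam) := by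
        rw [Real.div_rpow hνpos.le (by norm_num), Real.rpow_neg (by norm_num), div_eq_mul_inv]
      rw [he]
      have : c1 ≤ (3:ℝ)^(-lam) := min_le_left _ _
      nlinarith [Real.rpow_nonneg hνpos.le lam]
    · have : c1 ≤ 1 := min_le_right _ _
      nlinarith [Real.rpow_nonneg hνpos.le lam]
  have hcount : (ν:ℝ)/3 ≤ (↑(ν - ν/2) : ℝ) := by
    have : ν ≤ 3 * (ν - ν/2) := by omega
    have h := (Nat.cast_le (α := ℝ)).mpr this
    push_cast at h
    linarith
  have hkey : (c1/3) * (ν:ℝ)^(lam+1) ≤ (↑(ν - ν/2) : ℝ) * b := by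
    have he : (ν:ℝ)^(lam+1) = (ν:ℝ)^lam * (ν:ℝ) := Real.rpow_add_one hνpos.ne' lam
    rw [he]
    have h1 : (c1/3) * ((ν:ℝ)^lam * (ν:ℝ)) = ((ν:ℝ)/3) * (c1 * (ν:ℝ)^lam) := by ring
    rw [h1]
    apply mul_le_mul hcount hbc1 (by positivity) (by positivity)
  have hsub : ∑ j ∈ Icc (ν/2) (ν-1), (j:ℝ)^lam ≤ ∑ j ∈ Icc A (ν-1), (j:ℝ)^lam := by
    apply Finset.sum_le_sum_of_subset_of_nonneg
    · apply Finset.Icc_subset_Icc_left (by omega : A ≤ ν/2)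
    · intro j _ _; exact Real.rpow_nonneg (Nat.cast_nonneg j) _
  calc (c1/3) * (ν:ℝ)^(lam+1) ≤ (↑(ν - ν/2) : ℝ) * b := hkey
    _ ≤ ∑ j ∈ Icc (ν/2) (ν-1), (j:ℝ)^lam := h3
    _ ≤ ∑ j ∈ Icc A (ν-1), (j:ℝ)^lam := hsub

private lemma T_lower_A (lam : ℝ) {A ν : ℕ} (hA : 1 ≤ A) (hν1 : A + 1 ≤ ν) (hν2 : ν ≤ 2*A) :
    (↑(ν - A) : ℝ) * min ((A:ℝ)^lam) ((2*(A:ℝ))^lam) ≤ ∑ j ∈ Icc A (ν-1), (j:ℝ)^lam := by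
  have hApos : (0:ℝ) < (A:ℝ) := by exact_mod_cast hA
  have hb : ∀ j ∈ Icc A (ν-1), min ((A:ℝ)^lam) ((2*(A:ℝ))^lam) ≤ (j:ℝ)^lam := by
    intro j hj
    simp only [mem_Icc] at hj
    apply min_rpow_le lam hApos
    · exact_mod_cast hj.1
    · have : j ≤ 2 * A := by omega
      exact_mod_cast this
  have h3 := Finset.card_nsmul_le_sum (Icc A (ν-1)) (fun j => (j:ℝ)^lam)
    (min ((A:ℝ)^lam) ((2*(A:ℝ))^lam)) hb
  rw [Nat.card_Icc, (by omega : ν - 1 + 1 - A = ν - A), nsmul_eq_mul] at h3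
  exact h3

set_option maxHeartbeats 1000000 in
theorem stmt_11 (α lam p : ℝ) (hα : 0 < α) (hp0 : 0 < p) (hp1 : p ≤ 1) :
    ∃ C : ℝ, 0 < C ∧ ∀ a : ℕ → ℝ, (∀ ν, 0 ≤ a ν) → (∀ ν, a (ν + 1) ≤ a ν) →
      ∀ n m : ℕ, 1 ≤ n → 4 * n ≤ m →
        ∑ μ ∈ Icc (4 * n) m, (μ : ℝ) ^ (-α - 1) * (∑ ν ∈ Icc (4 * n) μ, a ν * (ν : ℝ) ^ lam) ^ p ≤
          C * ∑ μ ∈ Icc n m, (μ : ℝ) ^ (-α - 1) * (a μ * (μ : ℝ) ^ (lam + 1)) ^ p := by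
  have hp1' : p - 1 ≤ 0 := by linarith
  set K1 : ℝ := 1 + 1/α with hK1def
  have hK1 : 0 < K1 := by positivity
  set c1 : ℝ := min ((3:ℝ)^(-lam)) 1 with hc1def
  have hc1 : 0 < c1 := lt_min (Real.rpow_pos_of_pos (by norm_num) _) one_pos
  set KB : ℝ := K1 * (c1/3)^(p-1) with hKBdef
  have hKB : 0 < KB := mul_pos hK1 (Real.rpow_pos_of_pos (by positivity) _)
  set c2 : ℝ := min ((4:ℝ)^lam) ((8:ℝ)^lam) with hc2def
  have hc2 : 0 < c2 :=
    lt_min (Real.rpow_pos_of_pos (by norm_num) _) (Real.rpow_pos_of_pos (by norm_num) _)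
  set c3 : ℝ := max ((4:ℝ)^(lam-α)) ((8:ℝ)^(lam-α)) with hc3def
  have hc3 : 0 < c3 :=
    lt_of_lt_of_le (Real.rpow_pos_of_pos (by norm_num) _) (le_max_left _ _)
  set CA : ℝ := K1 * c3 * c2^(p-1) * (4/p) with hCAdef
  have hCA : 0 < CA := by
    have := Real.rpow_pos_of_pos hc2 (p-1); positivity
  set c4 : ℝ := (4:ℝ)^(lam*p - α) with hc4def
  have hc4 : 0 < c4 := Real.rpow_pos_of_pos (by norm_num) _
  set c5 : ℝ := min 1 ((4:ℝ)^((lam+1)*p - α - 1)) with hc5def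
  have hc5 : 0 < c5 := lt_min one_pos (Real.rpow_pos_of_pos (by norm_num) _)
  refine ⟨KB + (K1*c4 + CA)/c5, by positivity, ?_⟩
  intro a ha0 hdec n m hn hm
  have hanti : ∀ i j : ℕ, i ≤ j → a j ≤ a i := fun i j h => antitone_nat_of_succ_le hdec h
  have hrterm : ∀ μ : ℕ, (0:ℝ) ≤ (μ:ℝ)^(-α-1) * (a μ * (μ:ℝ)^(lam+1))^p := by
    intro μ
    exact mul_nonneg (Real.rpow_nonneg (Nat.cast_nonneg μ) _)
      (Real.rpow_nonneg (mul_nonneg (ha0 μ) (Real.rpow_nonneg (Nat.cast_nonneg μ) _)) _)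
  have hR0 : 0 ≤ ∑ μ ∈ Icc n m, (μ:ℝ)^(-α-1) * (a μ * (μ:ℝ)^(lam+1))^p :=
    Finset.sum_nonneg fun μ _ => hrterm μ
  rcases eq_or_lt_of_le (ha0 (4*n)) with hzero | haA
  · -- degenerate case : a (4*n) = 0
    have hz : ∀ ν, 4*n ≤ ν → a ν = 0 := fun ν h =>
      le_antisymm (hzero ▸ hanti (4*n) ν h) (ha0 ν)
    have hLHS0 : ∀ μ ∈ Icc (4*n) m,
        (μ:ℝ)^(-α-1) * (∑ ν ∈ Icc (4*n) μ, a ν * (ν:ℝ)^lam)^p = 0 := by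
      intro μ hμ
      have hsum0 : ∑ ν ∈ Icc (4*n) μ, a ν * (ν:ℝ)^lam = 0 :=
        Finset.sum_eq_zero fun ν hν => by
          rw [hz ν (mem_Icc.mp hν).1, zero_mul]
      rw [hsum0, Real.zero_rpow hp0.ne', mul_zero]
    rw [Finset.sum_eq_zero hLHS0]
    exact mul_nonneg (by positivity) hR0
  · -- main case : 0 < a (4*n)
    set A : ℕ := 4*n with hAdef
    have hA1 : 1 ≤ A := by omega
    set R : ℝ := ∑ μ ∈ Icc n m, (μ:ℝ)^(-α-1) * (a μ * (μ:ℝ)^(lam+1))^p with hRdef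
    set X : ℝ := (a A)^p * (n:ℝ)^((lam+1)*p - α) with hXdef
    have hn1 : (1:ℝ) ≤ (n:ℝ) := by exact_mod_cast hn
    have hnpos : (0:ℝ) < (n:ℝ) := by linarith
    have hX0 : 0 ≤ X := mul_nonneg (Real.rpow_nonneg (ha0 A) _) (Real.rpow_nonneg hnpos.le _)
    -- decomposition
    have hg0 : (∑ k ∈ Icc A (A-1), a k * (k:ℝ)^lam)^p = 0 := by
      rw [Finset.Icc_eq_empty (by omega), Finset.sum_empty, Real.zero_rpow hp0.ne']
    have hdecomp := decomp (fun μ => (∑ k ∈ Icc A μ, a k * (k:ℝ)^lam)^p)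
      (fun μ => (μ:ℝ)^(-α-1)) A m hA1 hg0
    rw [hdecomp]
    -- abbreviations
    set dd : ℕ → ℝ := fun ν =>
      (∑ k ∈ Icc A ν, a k * (k:ℝ)^lam)^p - (∑ k ∈ Icc A (ν-1), a k * (k:ℝ)^lam)^p with hdddef
    set W : ℕ → ℝ := fun ν => ∑ μ ∈ Icc ν m, (μ:ℝ)^(-α-1) with hWdef
    show ∑ ν ∈ Icc A m, dd ν * W ν ≤ (KB + (K1*c4 + CA)/c5) * R
    have hdd0 : ∀ ν, 0 ≤ dd ν := fun ν => d_nonneg a lam p hp0 ha0 A ν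
    -- split off the first term
    have hmemA : A ∈ Icc A m := by simp only [mem_Icc]; omega
    rw [← Finset.add_sum_erase _ _ hmemA, Finset.Icc_erase_left, ← Finset.Icc_add_one_left_eq_Ioc]
    rw [← Finset.sum_filter_add_sum_filter_not (Icc (A+1) m) (fun ν => ν ≤ 2*A)]
    -- the generic per-ν bound
    have hcore : ∀ ν : ℕ, A + 1 ≤ ν → dd ν * W ν
        ≤ (K1 * (ν:ℝ)^(-α)) * ((a ν)^p * (ν:ℝ)^lam * (∑ j ∈ Icc A (ν-1), (j:ℝ)^lam)^(p-1)) := by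
      intro ν hν
      have h1 : dd ν * W ν ≤ dd ν * (K1 * (ν:ℝ)^(-α)) :=
        mul_le_mul_of_nonneg_left (sum_w_le hα ν m (by omega)) (hdd0 ν)
      have h2 : dd ν ≤ (a ν)^p * (ν:ℝ)^lam * (∑ j ∈ Icc A (ν-1), (j:ℝ)^lam)^(p-1) :=
        d_bound a lam p hp0 hp1 ha0 hanti A hA1 haA ν hν
      have h3 : 0 ≤ K1 * (ν:ℝ)^(-α) :=
        mul_nonneg hK1.le (Real.rpow_nonneg (Nat.cast_nonneg ν) _)
      calc dd ν * W ν ≤ dd ν * (K1 * (ν:ℝ)^(-α)) := h1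
        _ ≤ ((a ν)^p * (ν:ℝ)^lam * (∑ j ∈ Icc A (ν-1), (j:ℝ)^lam)^(p-1)) * (K1 * (ν:ℝ)^(-α)) :=
            mul_le_mul_of_nonneg_right h2 h3
        _ = (K1 * (ν:ℝ)^(-α)) * ((a ν)^p * (ν:ℝ)^lam * (∑ j ∈ Icc A (ν-1), (j:ℝ)^lam)^(p-1)) := by
            ring
    -- first term bound
    have hApos : (0:ℝ) < (A:ℝ) := by exact_mod_cast hA1
    have hcastA : (A:ℝ) = 4 * (n:ℝ) := by rw [hAdef]; push_cast; ring
    have hTermA : dd A * W A ≤ K1 * c4 * X := by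
      have hddA : dd A = (a A * (A:ℝ)^lam)^p := by
        simp only [hdddef]
        rw [Finset.Icc_self, Finset.sum_singleton, hg0, sub_zero]
      have hWA : W A ≤ K1 * (A:ℝ)^(-α) := sum_w_le hα A m (by omega)
      have h1 : dd A * W A ≤ dd A * (K1 * (A:ℝ)^(-α)) :=
        mul_le_mul_of_nonneg_left hWA (hdd0 A)
      have hsplit : (a A * (A:ℝ)^lam)^p = (a A)^p * (A:ℝ)^(lam*p) := by
        rw [Real.mul_rpow (ha0 A) (Real.rpow_nonneg hApos.le _), ← Real.rpow_mul hApos.le]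
      have hAexp : (A:ℝ)^(lam*p) * (A:ℝ)^(-α) = c4 * (n:ℝ)^(lam*p-α) := by
        rw [← Real.rpow_add hApos, show lam*p + -α = lam*p - α from by ring, hcastA,
          Real.mul_rpow (by norm_num : (0:ℝ) ≤ 4) hnpos.le, hc4def]
      have hnle : (n:ℝ)^(lam*p-α) ≤ (n:ℝ)^((lam+1)*p-α) :=
        Real.rpow_le_rpow_of_exponent_le hn1 (by nlinarith [hp0.le])
      calc dd A * W A ≤ dd A * (K1 * (A:ℝ)^(-α)) := h1
        _ = K1 * ((a A)^p * ((A:ℝ)^(lam*p) * (A:ℝ)^(-α))) := by rw [hddA, hsplit]; ring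
        _ = K1 * ((a A)^p * (c4 * (n:ℝ)^(lam*p-α))) := by rw [hAexp]
        _ ≤ K1 * ((a A)^p * (c4 * (n:ℝ)^((lam+1)*p-α))) := by
            apply mul_le_mul_of_nonneg_left _ hK1.le
            apply mul_le_mul_of_nonneg_left _ (Real.rpow_nonneg (ha0 A) p)
            exact mul_le_mul_of_nonneg_left hnle hc4.le
        _ = K1 * c4 * X := by rw [hXdef]; ring
    -- part A bound
    have hPartA : ∑ ν ∈ (Icc (A+1) m).filter (fun ν => ν ≤ 2*A), dd ν * W ν ≤ CA * X := by
      have hnlam : (0:ℝ) < (n:ℝ)^lam := Real.rpow_pos_of_pos hnpos _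
      set D : ℝ := K1 * c3 * c2^(p-1) * (a A)^p * (n:ℝ)^(lam-α) * (n:ℝ)^(lam*(p-1)) with hDdef
      have hD0 : 0 ≤ D := by
        have h2 := (Real.rpow_pos_of_pos hc2 (p-1)).le
        have h3 := (Real.rpow_pos_of_pos hnpos (lam-α)).le
        have h4 := (Real.rpow_pos_of_pos hnpos (lam*(p-1))).le
        have h5 := Real.rpow_nonneg (ha0 A) p
        rw [hDdef]
        exact mul_nonneg (mul_nonneg (mul_nonneg (mul_nonneg
          (mul_nonneg hK1.le hc3.le) h2) h5) h3) h4
      have hpoint : ∀ ν ∈ (Icc (A+1) m).filter (fun ν => ν ≤ 2*A),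
          dd ν * W ν ≤ D * (↑(ν - A):ℝ)^(p-1) := by
        intro ν hν
        simp only [mem_filter, mem_Icc] at hν
        obtain ⟨⟨hν1, hν2⟩, hν3⟩ := hν
        have hνpos : (0:ℝ) < (ν:ℝ) := by exact_mod_cast (by omega : 0 < ν)
        have hT := T_lower_A lam hA1 hν1 hν3
        have hminc2 : c2 * (n:ℝ)^lam ≤ min ((A:ℝ)^lam) ((2*(A:ℝ))^lam) := by
          apply le_min
          · have he : ((A:ℝ))^lam = (4:ℝ)^lam * (n:ℝ)^lam := by
              rw [hcastA, Real.mul_rpow (by norm_num) hnpos.le]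
            rw [he]
            exact mul_le_mul_of_nonneg_right (hc2def ▸ min_le_left _ _) hnlam.le
          · have he : ((2*(A:ℝ)))^lam = (8:ℝ)^lam * (n:ℝ)^lam := by
              rw [hcastA, show (2:ℝ)*(4*(n:ℝ)) = 8*(n:ℝ) from by ring,
                Real.mul_rpow (by norm_num) hnpos.le]
            rw [he]
            exact mul_le_mul_of_nonneg_right (hc2def ▸ min_le_right _ _) hnlam.le
        have hνA1 : (1:ℝ) ≤ (↑(ν-A):ℝ) := by exact_mod_cast (by omega : 1 ≤ ν - A)
        have hνApos : (0:ℝ) < (↑(ν-A):ℝ) := by linarith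
        have hTlow : (↑(ν-A):ℝ) * (c2 * (n:ℝ)^lam) ≤ ∑ j ∈ Icc A (ν-1), (j:ℝ)^lam :=
          le_trans (mul_le_mul_of_nonneg_left hminc2 hνApos.le) hT
        have hTlowpos : 0 < (↑(ν-A):ℝ) * (c2 * (n:ℝ)^lam) := by positivity
        have hTple : (∑ j ∈ Icc A (ν-1), (j:ℝ)^lam)^(p-1)
            ≤ (↑(ν-A):ℝ)^(p-1) * (c2^(p-1) * ((n:ℝ)^lam)^(p-1)) := by
          have he : ((↑(ν-A):ℝ) * (c2 * (n:ℝ)^lam))^(p-1)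
              = (↑(ν-A):ℝ)^(p-1) * (c2^(p-1) * ((n:ℝ)^lam)^(p-1)) := by
            rw [Real.mul_rpow hνApos.le (by positivity), Real.mul_rpow hc2.le hnlam.le]
          rw [← he]
          exact Real.rpow_le_rpow_of_nonpos hTlowpos hTlow hp1'
        have hnl : ((n:ℝ)^lam)^(p-1) = (n:ℝ)^(lam*(p-1)) := by
          rw [← Real.rpow_mul hnpos.le]
        rw [hnl] at hTple
        have haν : (a ν)^p ≤ (a A)^p :=
          Real.rpow_le_rpow (ha0 ν) (hanti A ν (by omega)) hp0.le
        have hνexp : (ν:ℝ)^(-α) * (ν:ℝ)^lam = (ν:ℝ)^(lam-α) := by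
          rw [← Real.rpow_add hνpos]; ring_nf
        have hν48 : (ν:ℝ)^(lam-α) ≤ c3 * (n:ℝ)^(lam-α) := by
          have h48 : (ν:ℝ)^(lam-α) ≤ max ((4*(n:ℝ))^(lam-α)) ((8*(n:ℝ))^(lam-α)) := by
            apply rpow_le_max (lam-α) (by positivity : (0:ℝ) < 4*(n:ℝ))
            · rw [← hcastA]
              exact_mod_cast (by omega : A ≤ ν)
            · have h8 : (ν:ℕ) ≤ 8*n := by omega
              calc (ν:ℝ) ≤ ((8*n:ℕ):ℝ) := by exact_mod_cast h8
                _ = 8*(n:ℝ) := by push_cast; ring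
          have e4 : (4*(n:ℝ))^(lam-α) = (4:ℝ)^(lam-α) * (n:ℝ)^(lam-α) :=
            Real.mul_rpow (by norm_num) hnpos.le
          have e8 : (8*(n:ℝ))^(lam-α) = (8:ℝ)^(lam-α) * (n:ℝ)^(lam-α) :=
            Real.mul_rpow (by norm_num) hnpos.le
          have hmax : max ((4*(n:ℝ))^(lam-α)) ((8*(n:ℝ))^(lam-α)) ≤ c3 * (n:ℝ)^(lam-α) := by
            apply max_le
            · rw [e4]
              exact mul_le_mul_of_nonneg_right (hc3def ▸ le_max_left _ _)
                (Real.rpow_nonneg hnpos.le _)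
            · rw [e8]
              exact mul_le_mul_of_nonneg_right (hc3def ▸ le_max_right _ _)
                (Real.rpow_nonneg hnpos.le _)
          exact le_trans h48 hmax
        have hT'0 : (0:ℝ) ≤ (∑ j ∈ Icc A (ν-1), (j:ℝ)^lam)^(p-1) :=
          Real.rpow_nonneg (Finset.sum_nonneg fun j _ =>
            Real.rpow_nonneg (Nat.cast_nonneg j) _) _
        have hcore' := hcore ν (by omega)
        have hmid : (a ν)^p * (ν:ℝ)^lam * (∑ j ∈ Icc A (ν-1), (j:ℝ)^lam)^(p-1)
            ≤ (a A)^p * (ν:ℝ)^lam *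
              ((↑(ν-A):ℝ)^(p-1) * (c2^(p-1) * (n:ℝ)^(lam*(p-1)))) := by
          apply mul_le_mul
          · exact mul_le_mul_of_nonneg_right haν (Real.rpow_nonneg hνpos.le _)
          · exact hTple
          · exact hT'0
          · exact mul_nonneg (Real.rpow_nonneg (ha0 A) _) (Real.rpow_nonneg hνpos.le _)
        calc dd ν * W ν
            ≤ K1 * (ν:ℝ)^(-α) * ((a ν)^p * (ν:ℝ)^lam *
                (∑ j ∈ Icc A (ν-1), (j:ℝ)^lam)^(p-1)) := hcore'
          _ ≤ K1 * (ν:ℝ)^(-α) * ((a A)^p * (ν:ℝ)^lam *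
                ((↑(ν-A):ℝ)^(p-1) * (c2^(p-1) * (n:ℝ)^(lam*(p-1))))) :=
              mul_le_mul_of_nonneg_left hmid
                (mul_nonneg hK1.le (Real.rpow_nonneg hνpos.le _))
          _ = ((ν:ℝ)^(-α) * (ν:ℝ)^lam) *
                (K1 * (a A)^p * c2^(p-1) * (n:ℝ)^(lam*(p-1)) * (↑(ν-A):ℝ)^(p-1)) := by
              ring
          _ ≤ (c3 * (n:ℝ)^(lam-α)) *
                (K1 * (a A)^p * c2^(p-1) * (n:ℝ)^(lam*(p-1)) * (↑(ν-A):ℝ)^(p-1)) := by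
              apply mul_le_mul_of_nonneg_right
              · rw [hνexp]; exact hν48
              · have h2 := (Real.rpow_pos_of_pos hc2 (p-1)).le
                have h4 := (Real.rpow_pos_of_pos hnpos (lam*(p-1))).le
                have h5 := Real.rpow_nonneg (ha0 A) p
                have h6 := Real.rpow_nonneg hνApos.le (p-1)
                exact mul_nonneg (mul_nonneg (mul_nonneg (mul_nonneg hK1.le h5) h2) h4) h6
          _ = D * (↑(ν-A):ℝ)^(p-1) := by rw [hDdef]; ring
      have hsum1 : ∑ ν ∈ (Icc (A+1) m).filter (fun ν => ν ≤ 2*A), dd ν * W ν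
          ≤ ∑ ν ∈ (Icc (A+1) m).filter (fun ν => ν ≤ 2*A), D * (↑(ν - A):ℝ)^(p-1) :=
        Finset.sum_le_sum hpoint
      have hsum2 : ∑ ν ∈ (Icc (A+1) m).filter (fun ν => ν ≤ 2*A), D * (↑(ν - A):ℝ)^(p-1)
          ≤ ∑ ν ∈ Icc (A+1) (A+A), D * (↑(ν - A):ℝ)^(p-1) := by
        apply Finset.sum_le_sum_of_subset_of_nonneg
        · intro ν hν
          simp only [mem_filter, mem_Icc] at hν
          simp only [mem_Icc]
          omega
        · intro ν _ _
          exact mul_nonneg hD0 (Real.rpow_nonneg (Nat.cast_nonneg _) _)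
      have hreind : ∑ ν ∈ Icc (A+1) (A+A), D * (↑(ν - A):ℝ)^(p-1)
          = D * ∑ k ∈ Icc 1 A, (k:ℝ)^(p-1) := by
        rw [Finset.mul_sum, ← Finset.map_add_left_Icc 1 A A, Finset.sum_map]
        apply Finset.sum_congr rfl
        intro k hk
        simp only [addLeftEmbedding_apply]
        rw [show A + k - A = k from by omega]
      have hfin : D * ∑ k ∈ Icc 1 A, (k:ℝ)^(p-1) ≤ D * ((1/p) * (A:ℝ)^p) :=
        mul_le_mul_of_nonneg_left (sum_pow_le hp0 hp1 A) hD0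
      have hAp : (A:ℝ)^p ≤ 4 * (n:ℝ)^p := by
        rw [hcastA, Real.mul_rpow (by norm_num) hnpos.le]
        have h44 : (4:ℝ)^p ≤ 4 := by
          calc (4:ℝ)^p ≤ (4:ℝ)^(1:ℝ) :=
                Real.rpow_le_rpow_of_exponent_le (by norm_num) hp1
            _ = 4 := Real.rpow_one 4
        exact mul_le_mul_of_nonneg_right h44 (Real.rpow_nonneg hnpos.le _)
      have hlast : D * ((1/p) * (A:ℝ)^p) ≤ D * ((1/p) * (4 * (n:ℝ)^p)) := by
        apply mul_le_mul_of_nonneg_left _ hD0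
        exact mul_le_mul_of_nonneg_left hAp (by positivity)
      have hid : D * ((1/p) * (4 * (n:ℝ)^p)) = CA * X := by
        have hnn : (n:ℝ)^(lam-α) * (n:ℝ)^(lam*(p-1)) * (n:ℝ)^p = (n:ℝ)^((lam+1)*p-α) := by
          rw [← Real.rpow_add hnpos, ← Real.rpow_add hnpos,
            show lam - α + lam*(p-1) + p = (lam+1)*p - α from by ring]
        have h2 : D * ((1/p) * (4 * (n:ℝ)^p))
            = K1 * c3 * c2^(p-1) * (4/p)
              * ((a A)^p * ((n:ℝ)^(lam-α) * (n:ℝ)^(lam*(p-1)) * (n:ℝ)^p)) := by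
          rw [hDdef]; field_simp
        rw [h2, hnn, hCAdef, hXdef]
      calc ∑ ν ∈ (Icc (A+1) m).filter (fun ν => ν ≤ 2*A), dd ν * W ν
          ≤ ∑ ν ∈ (Icc (A+1) m).filter (fun ν => ν ≤ 2*A), D * (↑(ν - A):ℝ)^(p-1) := hsum1
        _ ≤ ∑ ν ∈ Icc (A+1) (A+A), D * (↑(ν - A):ℝ)^(p-1) := hsum2
        _ = D * ∑ k ∈ Icc 1 A, (k:ℝ)^(p-1) := hreind
        _ ≤ D * ((1/p) * (A:ℝ)^p) := hfin
        _ ≤ D * ((1/p) * (4 * (n:ℝ)^p)) := hlast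
        _ = CA * X := hid
    -- part B bound
    have hPartB : ∑ ν ∈ (Icc (A+1) m).filter (fun ν => ¬ ν ≤ 2*A), dd ν * W ν ≤ KB * R := by
      have hpoint : ∀ ν ∈ (Icc (A+1) m).filter (fun ν => ¬ ν ≤ 2*A),
          dd ν * W ν ≤ KB * ((ν:ℝ)^(-α-1) * (a ν * (ν:ℝ)^(lam+1))^p) := by
        intro ν hν
        simp only [mem_filter, mem_Icc] at hν
        obtain ⟨⟨hν1, hν2⟩, hν3⟩ := hν
        have hν8 : 2*A + 1 ≤ ν := by omega
        have hν1' : (1:ℝ) ≤ (ν:ℝ) := by exact_mod_cast (by omega : 1 ≤ ν)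
        have hνpos : (0:ℝ) < (ν:ℝ) := by linarith
        have hT := T_lower_B lam hA1 hν8
        rw [← hc1def] at hT
        have hνlp : (0:ℝ) < (ν:ℝ)^(lam+1) := Real.rpow_pos_of_pos hνpos _
        have hTlowpos : 0 < (c1/3) * (ν:ℝ)^(lam+1) := by positivity
        have hTexp : ((c1/3) * (ν:ℝ)^(lam+1))^(p-1)
            = (c1/3)^(p-1) * (ν:ℝ)^((lam+1)*(p-1)) := by
          rw [Real.mul_rpow (by positivity) (Real.rpow_nonneg hνpos.le _),
            ← Real.rpow_mul hνpos.le]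
        have hTle : (∑ j ∈ Icc A (ν-1), (j:ℝ)^lam)^(p-1)
            ≤ (c1/3)^(p-1) * (ν:ℝ)^((lam+1)*(p-1)) := by
          rw [← hTexp]
          exact Real.rpow_le_rpow_of_nonpos hTlowpos hT hp1'
        have hcore' := hcore ν (by omega)
        have hmid : (a ν)^p * (ν:ℝ)^lam * (∑ j ∈ Icc A (ν-1), (j:ℝ)^lam)^(p-1)
            ≤ (a ν)^p * (ν:ℝ)^lam * ((c1/3)^(p-1) * (ν:ℝ)^((lam+1)*(p-1))) :=
          mul_le_mul_of_nonneg_left hTle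
            (mul_nonneg (Real.rpow_nonneg (ha0 ν) p) (Real.rpow_nonneg hνpos.le lam))
        have hstep : dd ν * W ν ≤ K1 * (ν:ℝ)^(-α) * ((a ν)^p * (ν:ℝ)^lam *
            ((c1/3)^(p-1) * (ν:ℝ)^((lam+1)*(p-1)))) :=
          le_trans hcore' (mul_le_mul_of_nonneg_left hmid
            (mul_nonneg hK1.le (Real.rpow_nonneg hνpos.le _)))
        have hrexp : (ν:ℝ)^(-α-1) * (a ν * (ν:ℝ)^(lam+1))^p
            = (a ν)^p * ((ν:ℝ)^(-α-1) * (ν:ℝ)^((lam+1)*p)) := by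
          rw [Real.mul_rpow (ha0 ν) (Real.rpow_nonneg hνpos.le _), ← Real.rpow_mul hνpos.le]
          ring
        have heq : K1 * (ν:ℝ)^(-α) * ((a ν)^p * (ν:ℝ)^lam *
            ((c1/3)^(p-1) * (ν:ℝ)^((lam+1)*(p-1))))
            = KB * ((ν:ℝ)^(-α-1) * (a ν * (ν:ℝ)^(lam+1))^p) := by
          rw [hrexp, hKBdef]
          have h1 : K1 * (ν:ℝ)^(-α) * ((a ν)^p * (ν:ℝ)^lam *
              ((c1/3)^(p-1) * (ν:ℝ)^((lam+1)*(p-1))))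
              = K1 * (c1/3)^(p-1) * (a ν)^p
                * ((ν:ℝ)^(-α) * ((ν:ℝ)^lam * (ν:ℝ)^((lam+1)*(p-1)))) := by ring
          rw [h1]
          simp only [← Real.rpow_add hνpos]
          rw [show -α + (lam + (lam+1)*(p-1)) = -α-1 + (lam+1)*p from by ring]
          ring
        rw [← heq]
        exact hstep
      calc ∑ ν ∈ (Icc (A+1) m).filter (fun ν => ¬ ν ≤ 2*A), dd ν * W ν
          ≤ ∑ ν ∈ (Icc (A+1) m).filter (fun ν => ¬ ν ≤ 2*A),
              KB * ((ν:ℝ)^(-α-1) * (a ν * (ν:ℝ)^(lam+1))^p) := Finset.sum_le_sum hpoint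
        _ = KB * ∑ ν ∈ (Icc (A+1) m).filter (fun ν => ¬ ν ≤ 2*A),
              (ν:ℝ)^(-α-1) * (a ν * (ν:ℝ)^(lam+1))^p := by rw [Finset.mul_sum]
        _ ≤ KB * R := by
            apply mul_le_mul_of_nonneg_left _ hKB.le
            rw [hRdef]
            apply Finset.sum_le_sum_of_subset_of_nonneg
            · intro ν hν
              simp only [mem_filter, mem_Icc] at hν
              simp only [mem_Icc]
              omega
            · intro μ _ _
              exact hrterm μ
    -- RHS lower bound
    have hRlow : c5 * X ≤ R := by
      set β : ℝ := (lam+1)*p - α - 1 with hβdef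
      have hb0 : ∀ μ ∈ Icc n (4*n-1),
          (a A)^p * (c5 * (n:ℝ)^β) ≤ (μ:ℝ)^(-α-1) * (a μ * (μ:ℝ)^(lam+1))^p := by
        intro μ hμ
        simp only [mem_Icc] at hμ
        obtain ⟨hμ1, hμ2⟩ := hμ
        have hμpos : (0:ℝ) < (μ:ℝ) := by exact_mod_cast (by omega : 0 < μ)
        have haμ : a A ≤ a μ := hanti μ A (by omega)
        have h1 : (a A * (μ:ℝ)^(lam+1))^p ≤ (a μ * (μ:ℝ)^(lam+1))^p :=
          Real.rpow_le_rpow (mul_nonneg (ha0 A) (Real.rpow_nonneg hμpos.le _))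
            (mul_le_mul_of_nonneg_right haμ (Real.rpow_nonneg hμpos.le _)) hp0.le
        have h2 : (a A * (μ:ℝ)^(lam+1))^p = (a A)^p * (μ:ℝ)^((lam+1)*p) := by
          rw [Real.mul_rpow (ha0 A) (Real.rpow_nonneg hμpos.le _), ← Real.rpow_mul hμpos.le]
        have h3 : (μ:ℝ)^(-α-1) * ((a A)^p * (μ:ℝ)^((lam+1)*p)) = (a A)^p * (μ:ℝ)^β := by
          rw [hβdef]
          have he : (μ:ℝ)^(-α-1) * (μ:ℝ)^((lam+1)*p) = (μ:ℝ)^((lam+1)*p - α - 1) := by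
            rw [← Real.rpow_add hμpos, show -α-1 + (lam+1)*p = (lam+1)*p-α-1 from by ring]
          rw [← he]; ring
        have h4 : c5 * (n:ℝ)^β ≤ (μ:ℝ)^β := by
          have hmin : min ((n:ℝ)^β) ((4*(n:ℝ))^β) ≤ (μ:ℝ)^β := by
            apply min_rpow_le β hnpos
            · exact_mod_cast hμ1
            · calc (μ:ℝ) ≤ ((4*n:ℕ):ℝ) := by exact_mod_cast (by omega : μ ≤ 4*n)
                _ = 4*(n:ℝ) := by push_cast; ring
          refine le_trans (le_min ?_ ?_) hmin
          · have hle : c5 ≤ 1 := hc5def ▸ min_le_left _ _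
            calc c5 * (n:ℝ)^β ≤ 1 * (n:ℝ)^β :=
                  mul_le_mul_of_nonneg_right hle (Real.rpow_nonneg hnpos.le β)
              _ = (n:ℝ)^β := one_mul _
          · rw [Real.mul_rpow (by norm_num : (0:ℝ) ≤ 4) hnpos.le]
            have hle : c5 ≤ (4:ℝ)^β := by
              rw [hc5def, hβdef]; exact min_le_right _ _
            exact mul_le_mul_of_nonneg_right hle (Real.rpow_nonneg hnpos.le β)
        calc (a A)^p * (c5 * (n:ℝ)^β)
            ≤ (a A)^p * (μ:ℝ)^β := mul_le_mul_of_nonneg_left h4 (Real.rpow_nonneg (ha0 A) p)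
          _ = (μ:ℝ)^(-α-1) * ((a A)^p * (μ:ℝ)^((lam+1)*p)) := h3.symm
          _ = (μ:ℝ)^(-α-1) * (a A * (μ:ℝ)^(lam+1))^p := by rw [h2]
          _ ≤ (μ:ℝ)^(-α-1) * (a μ * (μ:ℝ)^(lam+1))^p :=
              mul_le_mul_of_nonneg_left h1 (Real.rpow_nonneg hμpos.le _)
      have hcard := Finset.card_nsmul_le_sum (Icc n (4*n-1))
        (fun μ => (μ:ℝ)^(-α-1) * (a μ * (μ:ℝ)^(lam+1))^p) ((a A)^p * (c5 * (n:ℝ)^β)) hb0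
      rw [Nat.card_Icc, show 4*n-1+1-n = 3*n from by omega, nsmul_eq_mul] at hcard
      have hsub : ∑ μ ∈ Icc n (4*n-1), (μ:ℝ)^(-α-1) * (a μ * (μ:ℝ)^(lam+1))^p ≤ R := by
        rw [hRdef]
        apply Finset.sum_le_sum_of_subset_of_nonneg
        · exact Finset.Icc_subset_Icc_right (by omega)
        · intro μ _ _; exact hrterm μ
      have e0 : (n:ℝ)^β * (n:ℝ) = (n:ℝ)^((lam+1)*p-α) := by
        rw [hβdef, ← Real.rpow_add_one hnpos.ne',
          show (lam+1)*p-α-1+1 = (lam+1)*p-α from by ring]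
      have e1 : c5 * X = (a A)^p * c5 * ((n:ℝ)^β * (n:ℝ)) := by
        rw [hXdef, e0]; ring
      have hq : 0 ≤ (a A)^p * c5 * ((n:ℝ)^β * (n:ℝ)) := by
        have := Real.rpow_nonneg (ha0 A) p
        have := Real.rpow_nonneg hnpos.le β
        positivity
      calc c5 * X = (a A)^p * c5 * ((n:ℝ)^β * (n:ℝ)) := e1
        _ ≤ 3 * ((a A)^p * c5 * ((n:ℝ)^β * (n:ℝ))) := by linarith
        _ = ((3*n:ℕ):ℝ) * ((a A)^p * (c5 * (n:ℝ)^β)) := by push_cast; ring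
        _ ≤ ∑ μ ∈ Icc n (4*n-1), (μ:ℝ)^(-α-1) * (a μ * (μ:ℝ)^(lam+1))^p := hcard
        _ ≤ R := hsub
    -- assemble
    have hfinal : (K1*c4 + CA) * X ≤ ((K1*c4 + CA)/c5) * R := by
      have h1 : ((K1*c4 + CA)/c5) * (c5 * X) = (K1*c4 + CA) * X := by
        field_simp
      have h2 : ((K1*c4 + CA)/c5) * (c5 * X) ≤ ((K1*c4 + CA)/c5) * R :=
        mul_le_mul_of_nonneg_left hRlow (by positivity)
      linarith
    have : dd A * W A
        + (∑ ν ∈ (Icc (A+1) m).filter (fun ν => ν ≤ 2*A), dd ν * W ν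
          + ∑ ν ∈ (Icc (A+1) m).filter (fun ν => ¬ ν ≤ 2*A), dd ν * W ν)
        ≤ K1 * c4 * X + (CA * X + KB * R) := by
      exact add_le_add hTermA (add_le_add hPartA hPartB)
    calc dd A * W A
        + (∑ ν ∈ (Icc (A+1) m).filter (fun ν => ν ≤ 2*A), dd ν * W ν
          + ∑ ν ∈ (Icc (A+1) m).filter (fun ν => ¬ ν ≤ 2*A), dd ν * W ν)
        ≤ K1 * c4 * X + (CA * X + KB * R) := this
      _ = (K1*c4 + CA) * X + KB * R := by ring
      _ ≤ ((K1*c4 + CA)/c5) * R + KB * R := by linarith [hfinal]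
      _ = (KB + (K1*c4 + CA)/c5) * R := by ring
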